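/- Let G be a connected bipartite graph on at least 3 vertices with bipartition (X, Y). Then χ'_it(G) = 2 if and only if |X| is even or |Y| is even. -/
import Mathlib


open Finset

-- The vertex label induced by an edge coloring: `twinLabel G s v = Σ_{e ∈ E_v} s e` in `ZMod k`.
open scoped Classical in
noncomputable def twinLabel {V : Type*} [Fintype V] (G : SimpleGraph V) {k : ℕ}
    (s : Sym2 V → ZMod k) (v : V) : ZMod k :=
  ∑ e ∈ G.incidenceFinset v, s e

/-- `s` is an improper twin `k`-edge coloring of `G`: the induced vertex labeling
is a proper vertex coloring. -/
def IsImproperTwin {V : Type*} [Fintype V] (G : SimpleGraph V) (k : ℕ)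
    (s : Sym2 V → ZMod k) : Prop :=
  ∀ ⦃u v : V⦄, G.Adj u v → twinLabel G s u ≠ twinLabel G s v

/-- The improper twin chromatic index: the least `k ≥ 2` admitting an improper twin
`k`-edge coloring. -/
noncomputable def improperTwinIndex {V : Type*} [Fintype V] (G : SimpleGraph V) : ℕ :=
  sInf {k | 2 ≤ k ∧ ∃ s : Sym2 V → ZMod k, IsImproperTwin G k s}

open scoped Classical

section Aux

variable {V : Type*} [Fintype V] (G : SimpleGraph V)

lemma twinLabel_add (s t : Sym2 V → ZMod 2) (x : V) :
    twinLabel G (fun e => s e + t e) x = twinLabel G s x + twinLabel G t x := by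
  unfold twinLabel
  exact Finset.sum_add_distrib

lemma twinLabel_zero (x : V) :
    twinLabel G (fun _ => (0 : ZMod 2)) x = 0 := by
  unfold twinLabel
  exact Finset.sum_const_zero

lemma twinLabel_edge {u w : V} (h : G.Adj u w) (x : V) :
    twinLabel G (fun e => if e = s(u, w) then (1 : ZMod 2) else 0) x
      = (if x = u then 1 else 0) + (if x = w then 1 else 0) := by
  unfold twinLabel
  rw [Finset.sum_ite_eq' (G.incidenceFinset x) (s(u, w)) (fun _ => (1 : ZMod 2))]
  have hmem : s(u, w) ∈ G.incidenceFinset x ↔ G.Adj u w ∧ (x = u ∨ x = w) := by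
    rw [SimpleGraph.mem_incidenceFinset]
    exact SimpleGraph.mk'_mem_incidenceSet_iff G
  have hne : u ≠ w := h.ne
  by_cases h1 : x = u <;> by_cases h2 : x = w
  · exact absurd (h1 ▸ h2 ▸ rfl) hne
  · rw [if_pos (hmem.mpr ⟨h, Or.inl h1⟩), if_pos h1, if_neg h2]; decide
  · rw [if_pos (hmem.mpr ⟨h, Or.inr h2⟩), if_neg h1, if_pos h2]; decide
  · rw [if_neg (fun hc => by rcases (hmem.mp hc).2 with h' | h' <;> [exact h1 h'; exact h2 h']),
      if_neg h1, if_neg h2]; decide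

lemma exists_walk_indicator : ∀ {u v : V}, G.Walk u v →
    ∃ s : Sym2 V → ZMod 2, ∀ x : V,
      twinLabel G s x = (if x = u then 1 else 0) + (if x = v then 1 else 0)
  | u, _, SimpleGraph.Walk.nil => by
      refine ⟨fun _ => 0, fun x => ?_⟩
      rw [twinLabel_zero]
      by_cases hx : x = u <;> simp [hx] <;> decide
  | u, v, SimpleGraph.Walk.cons (v := w) h p => by
      obtain ⟨s, hs⟩ := exists_walk_indicator p
      refine ⟨fun e => (if e = s(u, w) then 1 else 0) + s e, fun x => ?_⟩
      rw [twinLabel_add, twinLabel_edge G h, hs]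
      have habc : ∀ a b c : ZMod 2, (a + b) + (b + c) = a + c := by decide
      exact habc _ _ _

lemma exists_indicator (hG : G.Connected) (S : Finset V) (hS : Even S.card) :
    ∃ s : Sym2 V → ZMod 2, ∀ x : V, twinLabel G s x = if x ∈ S then 1 else 0 := by
  induction S using Finset.strongInduction with
  | _ S ih =>
    rcases S.eq_empty_or_nonempty with rfl | ⟨u, hu⟩
    · exact ⟨fun _ => 0, fun x => by rw [twinLabel_zero]; simp⟩
    · have hc1 : 1 ≤ S.card := Finset.card_pos.mpr ⟨u, hu⟩
      have hc2 : 2 ≤ S.card := by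
        rcases hS with ⟨m, hm⟩; omega
      obtain ⟨v, hv⟩ : (S.erase u).Nonempty := by
        rw [← Finset.card_pos, Finset.card_erase_of_mem hu]; omega
      have hvu : v ≠ u := (Finset.mem_erase.mp hv).1
      have hvS : v ∈ S := (Finset.mem_erase.mp hv).2
      set S' := (S.erase u).erase v with hS'
      have hsub : S' ⊂ S :=
        lt_of_le_of_lt (Finset.erase_subset _ _) (Finset.erase_ssubset hu)
      have hcard : S'.card = S.card - 2 := by
        rw [hS', Finset.card_erase_of_mem hv, Finset.card_erase_of_mem hu]
        omega
      have hSeven : Even S'.card := by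
        rcases hS with ⟨m, hm⟩
        exact ⟨m - 1, by omega⟩
      obtain ⟨s1, hs1⟩ := ih S' hsub hSeven
      obtain ⟨p⟩ := hG.preconnected u v
      obtain ⟨s2, hs2⟩ := exists_walk_indicator G p
      refine ⟨fun e => s1 e + s2 e, fun x => ?_⟩
      rw [twinLabel_add, hs1, hs2]
      have hxS' : x ∈ S' ↔ x ∈ S ∧ x ≠ v ∧ x ≠ u := by
        rw [hS', Finset.mem_erase, Finset.mem_erase]; tauto
      by_cases h1 : x = u
      · subst h1
        have : x ∉ S' := fun hc => ((hxS'.mp hc).2.2) rfl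
        rw [if_neg this, if_pos rfl, if_neg (Ne.symm hvu), if_pos hu]; decide
      · by_cases h2 : x = v
        · subst h2
          have : x ∉ S' := fun hc => ((hxS'.mp hc).2.1) rfl
          rw [if_neg this, if_neg h1, if_pos rfl, if_pos hvS]; decide
        · rw [if_neg h1, if_neg h2]
          have : x ∈ S' ↔ x ∈ S := by rw [hxS']; tauto
          by_cases h3 : x ∈ S
          · rw [if_pos (this.mpr h3), if_pos h3]; decide
          · rw [if_neg (fun hc => h3 (this.mp hc)), if_neg h3]; decide

lemma sum_twinLabel (s : Sym2 V → ZMod 2) :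
    ∑ x : V, twinLabel G s x = 0 := by
  have hz : ∀ z : ZMod 2, z + z = 0 := by decide
  unfold twinLabel
  calc ∑ x : V, ∑ e ∈ G.incidenceFinset x, s e
      = ∑ x : V, ∑ e ∈ G.edgeFinset, if x ∈ e then s e else 0 := by
        refine Finset.sum_congr rfl fun x _ => ?_
        rw [G.incidenceFinset_eq_filter, Finset.sum_filter]
    _ = ∑ e ∈ G.edgeFinset, ∑ x : V, if x ∈ e then s e else 0 := Finset.sum_comm
    _ = 0 := by
        refine Finset.sum_eq_zero fun e he => ?_
        rw [← Finset.sum_filter]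
        induction e with
        | h a b =>
          have hab : a ≠ b := by
            intro hc
            exact (SimpleGraph.mem_edgeFinset.mp he).ne (by rw [hc])
          have hfil : (Finset.univ.filter (· ∈ s(a, b))) = {a, b} := by
            ext x
            simp [Sym2.mem_iff]
          rw [hfil, Finset.sum_pair hab]
          exact hz _

lemma label_walk_iff {s : Sym2 V → ZMod 2} (hs : IsImproperTwin G 2 s)
    (X : Finset V) (hbipX : ∀ ⦃u w : V⦄, G.Adj u w → (u ∈ X ↔ w ∉ X)) :
    ∀ {u v : V}, G.Walk u v →
      (twinLabel G s u = twinLabel G s v ↔ (u ∈ X ↔ v ∈ X))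
  | u, _, SimpleGraph.Walk.nil => by simp
  | u, v, SimpleGraph.Walk.cons (v := w) h p => by
      have h1 : twinLabel G s u ≠ twinLabel G s w := hs h
      have h2 := label_walk_iff hs X hbipX p
      have h3 := hbipX h
      have key : ∀ a b c : ZMod 2, a ≠ b → (a = c ↔ ¬b = c) := by decide
      rw [key _ _ _ h1, h2]
      tauto

end Aux

theorem stmt_2 {V : Type*} [Fintype V] (G : SimpleGraph V) (hG : G.Connected)
    (h3 : 3 ≤ Fintype.card V) (X Y : Finset V)
    (hpart : ∀ v : V, v ∈ X ↔ v ∉ Y)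
    (hbip : ∀ ⦃u w : V⦄, G.Adj u w → (u ∈ X ↔ w ∈ Y)) :
    improperTwinIndex G = 2 ↔ (Even X.card ∨ Even Y.card) := by
  have hz01 : ∀ z : ZMod 2, z = 0 ∨ z = 1 := by decide
  -- Reduction: index = 2 ↔ ∃ twin 2-coloring
  have hred : improperTwinIndex G = 2 ↔ ∃ s : Sym2 V → ZMod 2, IsImproperTwin G 2 s := by
    constructor
    · intro h
      have hne : {k | 2 ≤ k ∧ ∃ s : Sym2 V → ZMod k, IsImproperTwin G k s}.Nonempty := by
        by_contra hemp
        rw [Set.not_nonempty_iff_eq_empty] at hemp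
        unfold improperTwinIndex at h
        rw [hemp, Nat.sInf_empty] at h
        omega
      have hmem := Nat.sInf_mem hne
      unfold improperTwinIndex at h
      rw [h] at hmem
      exact hmem.2
    · rintro ⟨s, hs⟩
      have hmem : 2 ∈ {k | 2 ≤ k ∧ ∃ s : Sym2 V → ZMod k, IsImproperTwin G k s} :=
        ⟨le_refl 2, s, hs⟩
      have h1 : improperTwinIndex G ≤ 2 := Nat.sInf_le hmem
      have h2 : 2 ≤ improperTwinIndex G := (Nat.sInf_mem ⟨2, hmem⟩).1
      omega
  -- basic bipartition facts
  have hbipX : ∀ ⦃u w : V⦄, G.Adj u w → (u ∈ X ↔ w ∉ X) := by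
    intro u w h
    rw [hbip h, hpart w]
    tauto
  have hYcompl : Y = Xᶜ := by
    ext v
    rw [Finset.mem_compl]
    have := hpart v
    tauto
  rw [hred]
  constructor
  · rintro ⟨s, hs⟩
    -- X is nonempty
    obtain ⟨u0, v0, huv0⟩ : ∃ u v : V, G.Adj u v := by
      have h2 : 1 < Fintype.card V := by omega
      obtain ⟨u, v, huv⟩ := Fintype.exists_pair_of_one_lt_card h2
      obtain ⟨p⟩ := hG.preconnected u v
      cases p with
      | nil => exact absurd rfl huv
      | cons h _ => exact ⟨_, _, h⟩
    have hXne : X.Nonempty := by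
      by_cases hu : u0 ∈ X
      · exact ⟨u0, hu⟩
      · exact ⟨v0, by have := hbipX huv0; tauto⟩
    obtain ⟨x0, hx0⟩ := hXne
    set a := twinLabel G s x0 with ha
    have hval : ∀ v : V, twinLabel G s v = if v ∈ X then a else a + 1 := by
      intro v
      obtain ⟨p⟩ := hG.preconnected x0 v
      have := label_walk_iff G hs X hbipX p
      by_cases hv : v ∈ X
      · rw [if_pos hv]
        exact (this.mpr (by tauto)).symm
      · rw [if_neg hv]
        have hne : a ≠ twinLabel G s v := fun hc => hv ((this.mp hc).mp hx0)
        have key : ∀ x y : ZMod 2, x ≠ y → y = x + 1 := by decide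
        exact (key _ _ hne)
    have hsum := sum_twinLabel G s
    have hsplit : ∑ x : V, twinLabel G s x
        = ∑ x ∈ X, twinLabel G s x + ∑ x ∈ Xᶜ, twinLabel G s x :=
      (Finset.sum_add_sum_compl X _).symm
    have hXsum : ∑ x ∈ X, twinLabel G s x = X.card • a := by
      rw [Finset.sum_congr rfl (fun x hx => by rw [hval x, if_pos hx]), Finset.sum_const]
    have hYsum : ∑ x ∈ Xᶜ, twinLabel G s x = Y.card • (a + 1) := by
      rw [Finset.sum_congr rfl (fun x hx => by
        rw [hval x, if_neg (Finset.mem_compl.mp hx)]), Finset.sum_const, ← hYcompl]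
    have heq : (X.card : ZMod 2) * a + (Y.card : ZMod 2) * (a + 1) = 0 := by
      rw [← nsmul_eq_mul, ← nsmul_eq_mul, ← hXsum, ← hYsum, ← hsplit, hsum]
    have hdvd : ∀ n : ℕ, (n : ZMod 2) = 0 → Even n := by
      intro n hn
      obtain ⟨m, hm⟩ := (ZMod.natCast_eq_zero_iff n 2).mp hn
      exact ⟨m, by omega⟩
    rcases hz01 a with ha0 | ha1
    · right
      apply hdvd
      rw [ha0] at heq
      simpa using heq
    · left
      apply hdvd
      rw [ha1] at heq
      have : (1 : ZMod 2) + 1 = 0 := by decide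
      rw [this, mul_zero, mul_one, add_zero] at heq
      exact heq
  · intro h
    have build : ∀ S : Finset V, Even S.card →
        (∀ ⦃u w : V⦄, G.Adj u w → (u ∈ S ↔ w ∉ S)) →
        ∃ s : Sym2 V → ZMod 2, IsImproperTwin G 2 s := by
      intro S hSeven hSbip
      obtain ⟨s, hsval⟩ := exists_indicator G hG S hSeven
      refine ⟨s, fun u w h hc => ?_⟩
      rw [hsval u, hsval w] at hc
      have := hSbip h
      by_cases hu : u ∈ S <;> by_cases hw : w ∈ S
      · tauto
      · rw [if_pos hu, if_neg hw] at hc; exact absurd hc (by decide)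
      · rw [if_neg hu, if_pos hw] at hc; exact absurd hc (by decide)
      · tauto
    rcases h with hX | hY
    · exact build X hX hbipX
    · refine build Y hY ?_
      intro u w h
      have h1 := hbip h
      have h2 := hbip h.symm
      have h3 := hpart u
      have h4 := hpart w
      tauto
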